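/- Let A be the (n+1)×(n+1) max-plus bordered matrix with A_{1,j+1} = −q_j, A_{j+1,1} = p_j for 1 ≤ j ≤ n and all other entries −∞ (p, q ∈ ℝ^n). Then for every k ≥ 1, every diagonal entry of the max-plus power A^{⊗(2k−1)} equals −∞, and the max-plus trace of A^{⊗2k} equals k·max_{1≤j≤n}(p_j − q_j). -/

import Mathlib

/-- Max-plus identity matrix over ℝ ∪ {−∞}. -/
noncomputable def mpId (N : ℕ) : Fin N → Fin N → WithBot ℝ :=
  fun i j => if i = j then ((0 : ℝ) : WithBot ℝ) else ⊥

/-- Max-plus matrix product over ℝ ∪ {−∞}. -/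
noncomputable def mpMul {N : ℕ} (A B : Fin N → Fin N → WithBot ℝ) :
    Fin N → Fin N → WithBot ℝ :=
  fun i k => Finset.univ.sup fun j => A i j + B j k

/-- Max-plus matrix power. -/
noncomputable def mpPow {N : ℕ} (A : Fin N → Fin N → WithBot ℝ) :
    ℕ → Fin N → Fin N → WithBot ℝ
  | 0 => mpId N
  | m + 1 => mpMul (mpPow A m) A

/-- Max-plus trace: the maximum of the diagonal entries. -/
noncomputable def mpTrace {N : ℕ} (A : Fin N → Fin N → WithBot ℝ) : WithBot ℝ :=
  Finset.univ.sup fun i => A i i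

/-- The bordered (n+1)×(n+1) matrix with A_{1,j+1} = −q_j, A_{j+1,1} = p_j and
all other entries −∞. -/
noncomputable def bordered {n : ℕ} (p q : Fin n → ℝ) :
    Fin (n + 1) → Fin (n + 1) → WithBot ℝ :=
  fun i j =>
    if hi : i = 0 then
      (if hj : j = 0 then ⊥ else ((-q (j.pred hj) : ℝ) : WithBot ℝ))
    else if hj : j = 0 then ((p (i.pred hi) : ℝ) : WithBot ℝ) else ⊥



namespace MPaux

lemma sup_single {N : ℕ} (f : Fin N → WithBot ℝ) (a : Fin N)
    (h : ∀ b, b ≠ a → f b = ⊥) : Finset.univ.sup f = f a := by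
  refine le_antisymm (Finset.sup_le fun b _ => ?_) (Finset.le_sup (Finset.mem_univ a))
  by_cases hb : b = a
  · subst hb; exact le_rfl
  · simp [h b hb]

lemma add_sup_comm {N : ℕ} (c : ℝ) (f : Fin N → WithBot ℝ) :
    (c : WithBot ℝ) + Finset.univ.sup f = Finset.univ.sup fun j => (c : WithBot ℝ) + f j := by
  exact Finset.comp_sup_eq_sup_comp (fun x => (c : WithBot ℝ) + x)
    (fun x y => by
      rcases le_total x y with h | h
      · rw [sup_eq_right.mpr h, sup_eq_right.mpr (add_le_add (le_refl _) h)]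
      · rw [sup_eq_left.mpr h, sup_eq_left.mpr (add_le_add (le_refl _) h)])
    (by simp)

variable {n : ℕ} (p q : Fin n → ℝ) (hne : (Finset.univ : Finset (Fin n)).Nonempty)

/-- abbreviation for the max of p - q -/
noncomputable def Mv : ℝ := Finset.univ.sup' hne (fun j => p j - q j)

/-- the square of the bordered matrix -/
noncomputable def Bm : Fin (n + 1) → Fin (n + 1) → WithBot ℝ :=
  fun i j =>
    if hi : i = 0 then (if hj : j = 0 then ((Mv p q hne : ℝ) : WithBot ℝ) else ⊥)
    else if hj : j = 0 then ⊥
    else ((p (i.pred hi) - q (j.pred hj) : ℝ) : WithBot ℝ)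

noncomputable def addc (c : ℝ) (X : Fin (n + 1) → Fin (n + 1) → WithBot ℝ) :
    Fin (n + 1) → Fin (n + 1) → WithBot ℝ :=
  fun i j => (c : WithBot ℝ) + X i j

local notation "A" => bordered p q
local notation "M" => Mv p q hne
local notation "B" => Bm p q hne

lemma A00 : A 0 0 = ⊥ := by simp [bordered]
lemma A0s (j : Fin n) : A 0 j.succ = ((-q j : ℝ) : WithBot ℝ) := by
  simp [bordered, Fin.succ_ne_zero]
lemma As0 (i : Fin n) : A i.succ 0 = ((p i : ℝ) : WithBot ℝ) := by
  simp [bordered, Fin.succ_ne_zero]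
lemma Ass (i j : Fin n) : A i.succ j.succ = ⊥ := by
  simp [bordered, Fin.succ_ne_zero]

lemma sup_g : Finset.univ.sup (fun j : Fin (n + 1) => A 0 j + A j 0)
    = ((M : ℝ) : WithBot ℝ) := by
  refine le_antisymm (Finset.sup_le fun j _ => ?_) ?_
  · induction j using Fin.cases with
    | zero => simp [A00]
    | succ j =>
      rw [A0s, As0, ← WithBot.coe_add]
      have h2 : -q j + p j = p j - q j := by ring
      rw [h2]
      exact WithBot.coe_le_coe.mpr
        (Finset.le_sup' (fun j => p j - q j) (Finset.mem_univ j))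
  · obtain ⟨j₀, _, hj₀⟩ := Finset.exists_mem_eq_sup' hne (fun j => p j - q j)
    have h3 : ((M : ℝ) : WithBot ℝ) = A 0 j₀.succ + A j₀.succ 0 := by
      rw [A0s, As0, ← WithBot.coe_add]
      show ((Mv p q hne : ℝ) : WithBot ℝ) = _
      rw [Mv, hj₀]
      congr 1
      ring
    rw [h3]
    exact Finset.le_sup (f := fun j => A 0 j + A j 0) (Finset.mem_univ j₀.succ)

lemma mul_AA : mpMul A A = B := by
  funext i k
  show Finset.univ.sup (fun j => A i j + A j k) = B i k
  induction i using Fin.cases with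
  | zero =>
    induction k using Fin.cases with
    | zero => rw [sup_g p q hne]; simp [Bm]
    | succ k =>
      have : B 0 k.succ = ⊥ := by simp [Bm, Fin.succ_ne_zero]
      rw [this, ← le_bot_iff]
      refine Finset.sup_le fun j _ => ?_
      induction j using Fin.cases with
      | zero => simp [A00]
      | succ j => simp [Ass]
  | succ i =>
    induction k using Fin.cases with
    | zero =>
      have : B i.succ 0 = ⊥ := by simp [Bm, Fin.succ_ne_zero]
      rw [this, ← le_bot_iff]
      refine Finset.sup_le fun j _ => ?_
      induction j using Fin.cases with
      | zero => simp [A00]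
      | succ j => simp [Ass]
    | succ k =>
      rw [sup_single _ 0 (fun b hb => ?_)]
      · rw [As0, A0s, ← WithBot.coe_add]
        have hB : B i.succ k.succ = ((p i - q k : ℝ) : WithBot ℝ) := by
          simp [Bm, Fin.succ_ne_zero]
        rw [hB]
        congr 1
      · obtain ⟨b, rfl⟩ := Fin.exists_succ_eq.mpr hb
        simp [Ass]

lemma mul_BA : mpMul B A = addc M A := by
  funext i k
  show Finset.univ.sup (fun j => B i j + A j k) = (M : WithBot ℝ) + A i k
  induction i using Fin.cases with
  | zero =>
    induction k using Fin.cases with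
    | zero =>
      rw [A00, WithBot.add_bot, ← le_bot_iff]
      refine Finset.sup_le fun j _ => ?_
      induction j using Fin.cases with
      | zero => simp [A00, Bm]
      | succ j => simp [Bm, Fin.succ_ne_zero]
    | succ k =>
      rw [sup_single _ 0 (fun b hb => ?_)]
      · simp [Bm]
      · obtain ⟨b, rfl⟩ := Fin.exists_succ_eq.mpr hb
        have : B (0 : Fin (n+1)) b.succ = ⊥ := by simp [Bm, Fin.succ_ne_zero]
        simp [this]
  | succ i =>
    induction k using Fin.cases with
    | zero =>
      have hf : (fun j => B i.succ j + A j 0)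
          = fun j => ((p i : ℝ) : WithBot ℝ) + (A 0 j + A j 0) := by
        funext j
        induction j using Fin.cases with
        | zero => simp [Bm, Fin.succ_ne_zero, A00]
        | succ j =>
          have hB : B i.succ j.succ = ((p i - q j : ℝ) : WithBot ℝ) := by
            simp [Bm, Fin.succ_ne_zero]
          rw [A0s, As0, hB, ← WithBot.coe_add, ← WithBot.coe_add, ← WithBot.coe_add]
          congr 1
          ring
      rw [hf, ← add_sup_comm, sup_g p q hne, As0, ← WithBot.coe_add, ← WithBot.coe_add,
        add_comm (p i) (M : ℝ)]
    | succ k =>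
      rw [Ass, WithBot.add_bot, ← le_bot_iff]
      refine Finset.sup_le fun j _ => ?_
      induction j using Fin.cases with
      | zero => simp [Bm, Fin.succ_ne_zero]
      | succ j => simp [Ass]

lemma id_mul (X : Fin (n + 1) → Fin (n + 1) → WithBot ℝ) : mpMul (mpId (n + 1)) X = X := by
  funext i k
  show Finset.univ.sup (fun j => mpId (n+1) i j + X j k) = X i k
  rw [sup_single _ i (fun b hb => ?_)]
  · simp [mpId]
  · have : mpId (n+1) i b = ⊥ := by simp [mpId, Ne.symm hb]
    simp [this]

lemma mul_addc (c : ℝ) (X Y : Fin (n + 1) → Fin (n + 1) → WithBot ℝ) :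
    mpMul (addc c X) Y = addc c (mpMul X Y) := by
  funext i k
  show Finset.univ.sup (fun j => ((c : WithBot ℝ) + X i j) + Y j k)
      = (c : WithBot ℝ) + Finset.univ.sup (fun j => X i j + Y j k)
  rw [add_sup_comm]
  congr 1
  funext j
  rw [add_assoc]

lemma addc_zero (X : Fin (n + 1) → Fin (n + 1) → WithBot ℝ) : addc 0 X = X := by
  funext i j; simp [addc]

lemma addc_addc (c d : ℝ) (X : Fin (n + 1) → Fin (n + 1) → WithBot ℝ) :
    addc c (addc d X) = addc (c + d) X := by
  funext i j; simp [addc, WithBot.coe_add, add_assoc]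

lemma pows : ∀ k : ℕ, 1 ≤ k →
    mpPow A (2 * k - 1) = addc (((k - 1 : ℕ) : ℝ) * M) A ∧
    mpPow A (2 * k) = addc (((k - 1 : ℕ) : ℝ) * M) B := by
  intro k hk
  induction k, hk using Nat.le_induction with
  | base =>
    constructor
    · show mpPow A 1 = _
      show mpMul (mpPow A 0) A = _
      show mpMul (mpId (n+1)) A = _
      rw [id_mul]
      simp [addc_zero]
    · show mpPow A 2 = _
      show mpMul (mpPow A 1) A = _
      have h1 : mpPow A 1 = A := by
        show mpMul (mpId (n+1)) A = A
        exact id_mul (bordered p q)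
      rw [h1, mul_AA p q hne]
      simp [addc_zero]
  | succ k hk ih =>
    have hc : ((k + 1 - 1 : ℕ) : ℝ) * M = ((k - 1 : ℕ) : ℝ) * M + M := by
      rcases Nat.exists_eq_add_of_le hk with ⟨m, rfl⟩
      have hmm : 1 + m - 1 = m := by omega
      rw [hmm]
      push_cast
      ring
    have e1 : 2 * (k + 1) - 1 = (2 * k) + 1 := by omega
    have e2 : 2 * (k + 1) = (2 * k + 1) + 1 := by omega
    have h1 : mpPow A (2 * (k + 1) - 1) = addc (((k + 1 - 1 : ℕ) : ℝ) * M) A := by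
      rw [e1]
      show mpMul (mpPow A (2 * k)) A = _
      rw [ih.2, mul_addc, mul_BA p q hne, addc_addc, hc]
    refine ⟨h1, ?_⟩
    rw [e2]
    show mpMul (mpPow A (2 * k + 1)) A = _
    have : mpPow A (2 * k + 1) = mpPow A (2 * (k + 1) - 1) := by rw [e1]
    rw [this, h1, mul_addc, mul_AA p q hne]

lemma trace_B : mpTrace B = ((M : ℝ) : WithBot ℝ) := by
  unfold mpTrace
  refine le_antisymm (Finset.sup_le fun i _ => ?_) ?_
  · induction i using Fin.cases with
    | zero => simp [Bm]
    | succ i =>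
      have : B i.succ i.succ = ((p i - q i : ℝ) : WithBot ℝ) := by
        simp [Bm, Fin.succ_ne_zero]
      rw [this]
      exact WithBot.coe_le_coe.mpr
        (Finset.le_sup' (fun j => p j - q j) (Finset.mem_univ i))
  · have hB : ((M : ℝ) : WithBot ℝ) = B 0 0 := by simp [Bm]
    rw [hB]
    exact Finset.le_sup (f := fun i => B i i) (Finset.mem_univ (0 : Fin (n+1)))

end MPaux

theorem bordered_maxplus_power_traces {n : ℕ} (hn : 0 < n) (p q : Fin n → ℝ) :
    ∀ k : ℕ, 1 ≤ k →
      (∀ i, mpPow (bordered p q) (2 * k - 1) i i = ⊥) ∧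
      mpTrace (mpPow (bordered p q) (2 * k)) =
        (((k : ℝ) * Finset.univ.sup' (Finset.univ_nonempty_iff.mpr ⟨⟨0, hn⟩⟩)
          (fun j => p j - q j) : ℝ) : WithBot ℝ) := by
  intro k hk
  have hne : (Finset.univ : Finset (Fin n)).Nonempty := Finset.univ_nonempty_iff.mpr ⟨⟨0, hn⟩⟩
  obtain ⟨h1, h2⟩ := MPaux.pows p q hne k hk
  have hAdiag : ∀ i : Fin (n + 1), bordered p q i i = ⊥ := by
    intro i
    induction i using Fin.cases with
    | zero => exact MPaux.A00 p q
    | succ i => exact MPaux.Ass p q i i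
  constructor
  · intro i
    rw [h1]
    simp [MPaux.addc, hAdiag i]
  · rw [h2]
    unfold mpTrace
    show Finset.univ.sup (fun i => ((((k - 1 : ℕ) : ℝ) * MPaux.Mv p q hne : ℝ) : WithBot ℝ)
        + MPaux.Bm p q hne i i) = _
    rw [← MPaux.add_sup_comm]
    have := MPaux.trace_B p q hne
    unfold mpTrace at this
    rw [this, ← WithBot.coe_add]
    congr 1
    rcases Nat.exists_eq_add_of_le hk with ⟨m, rfl⟩
    have hmm : 1 + m - 1 = m := by omega
    rw [hmm]
    push_cast [MPaux.Mv]
    ring
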